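/- For compacta X₁,…,Xₙ and a continuous t-norm ∗, the n-fold tensor product map ⊛̃ : MX₁ × … × MXₙ → M(X₁ × … × Xₙ) generated by ∗ is continuous. -/

import Mathlib

open Set TopologicalSpace

universe u v

/-- A (upper-semicontinuous) capacity on a topological space `X`:
a normalized monotone set function on the closed subsets, upper semicontinuous
in the sense of Zarichnyi–Nykyforchyn. -/
structure Capacity (X : Type u) [TopologicalSpace X] : Type u where
  toFun : Closeds X → ℝ
  empty' : toFun ⊥ = 0
  univ' : toFun ⊤ = 1
  mono' : ∀ F G : Closeds X, F ≤ G → toFun F ≤ toFun G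
  usc' : ∀ (F : Closeds X) (a : ℝ), toFun F < a →
    ∃ O : Set X, IsOpen O ∧ (F : Set X) ⊆ O ∧ ∀ B : Closeds X, (B : Set X) ⊆ O → toFun B < a

namespace Capacity

variable {X : Type u} [TopologicalSpace X]

/-- Value of a capacity on (the closure of) an arbitrary set; on closed sets this is
the value of the capacity. -/
def cval (ν : Capacity X) (A : Set X) : ℝ := ν.toFun ⟨closure A, isClosed_closure⟩

/-- The sup-extension of a capacity to open sets:
`ν(U) = sup {ν K : K closed, K ⊆ U}`. -/
noncomputable def oval (ν : Capacity X) (U : Set X) : ℝ :=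
  sSup {r : ℝ | ∃ K : Closeds X, (K : Set X) ⊆ U ∧ ν.toFun K = r}

end Capacity

/-- The topology on the space `MX` of capacities, generated by the subbase
`O₋(F,a) = {c : c(F) < a}` (`F` closed) and `O₊(U,a) = {c : c(U) > a}` (`U` open). -/
instance capacityTopology (X : Type u) [TopologicalSpace X] : TopologicalSpace (Capacity X) :=
  TopologicalSpace.generateFrom
    ({S | ∃ (F : Closeds X) (a : ℝ), a ∈ Icc (0:ℝ) 1 ∧
        S = {c : Capacity X | c.toFun F < a}} ∪
     {S | ∃ U : Set X, IsOpen U ∧ ∃ a ∈ Icc (0:ℝ) 1,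
        S = {c : Capacity X | a < c.oval U}})

/-- A possibility capacity: `ν(A ∪ B) = max (ν A) (ν B)` on closed sets. -/
def IsPossibility {X : Type u} [TopologicalSpace X] (ν : Capacity X) : Prop :=
  ∀ A B : Closeds X, ν.toFun (A ⊔ B) = max (ν.toFun A) (ν.toFun B)

/-- A necessity capacity: `ν(A ∩ B) = min (ν A) (ν B)` on closed sets. -/
def IsNecessity {X : Type u} [TopologicalSpace X] (ν : Capacity X) : Prop :=
  ∀ A B : Closeds X, ν.toFun (A ⊓ B) = min (ν.toFun A) (ν.toFun B)

/-- A triangular norm on `[0,1]`. -/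
structure Tnorm : Type where
  toFun : ℝ → ℝ → ℝ
  mem' : ∀ s ∈ Icc (0:ℝ) 1, ∀ t ∈ Icc (0:ℝ) 1, toFun s t ∈ Icc (0:ℝ) 1
  comm' : ∀ s ∈ Icc (0:ℝ) 1, ∀ t ∈ Icc (0:ℝ) 1, toFun s t = toFun t s
  assoc' : ∀ s ∈ Icc (0:ℝ) 1, ∀ t ∈ Icc (0:ℝ) 1, ∀ r ∈ Icc (0:ℝ) 1,
    toFun (toFun s t) r = toFun s (toFun t r)
  mono' : ∀ s₁ ∈ Icc (0:ℝ) 1, ∀ s₂ ∈ Icc (0:ℝ) 1, ∀ t₁ ∈ Icc (0:ℝ) 1, ∀ t₂ ∈ Icc (0:ℝ) 1,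
    s₁ ≤ s₂ → t₁ ≤ t₂ → toFun s₁ t₁ ≤ toFun s₂ t₂
  one' : ∀ s ∈ Icc (0:ℝ) 1, toFun s 1 = s

/-- Continuity of a t-norm (on the unit square). -/
def Tnorm.Cont (star : Tnorm) : Prop :=
  ContinuousOn (fun q : ℝ × ℝ => star.toFun q.1 q.2) (Icc 0 1 ×ˢ Icc 0 1)

/-- The t-normed (fuzzy) integral `∫^{∨∗} f dν = sup { ν(f⁻¹[t,1]) ∗ t : t ∈ [0,1] }`. -/
noncomputable def tInt {X : Type u} [TopologicalSpace X] (star : Tnorm) (ν : Capacity X) (f : X → ℝ) : ℝ :=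
  sSup {r : ℝ | ∃ t ∈ Icc (0:ℝ) 1, r = star.toFun (ν.cval (f ⁻¹' Icc t 1)) t}
/-- Value of the binary tensor product generated by a t-norm `∗`:
`μ₁ ⊛̃ μ₂(B) = sup { μ₁({x : μ₂({y : (x,y) ∈ B}) ≥ t}) ∗ t : t ∈ [0,1] }`. -/
noncomputable def tensorVal₂ {X : Type u} {Y : Type v} [TopologicalSpace X] [TopologicalSpace Y]
    (ast : Tnorm) (μ₁ : Capacity X) (μ₂ : Capacity Y) (B : Set (X × Y)) : ℝ :=
  sSup {r : ℝ | ∃ t ∈ Icc (0:ℝ) 1,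
    r = ast.toFun (μ₁.cval {x : X | t ≤ μ₂.cval {y : Y | (x, y) ∈ B}}) t}

/-- `IsTensorRec ast μ τ` says that `τ` is the `m`-fold tensor product (generated by
the t-norm `ast`) of the capacities `μ j`, defined by iteration of the binary tensor
product, splitting off the first coordinate at each step. -/
def IsTensorRec (ast : Tnorm) : ∀ {m : ℕ} {X : Fin m → Type u}
    [inst : ∀ j, TopologicalSpace (X j)],
    (∀ j, Capacity (X j)) → Capacity (∀ j, X j) → Prop
  | 0, _, _, _, _ => True
  | (m+1), X, inst, μ, τ =>
    letI := inst
    ∃ σ : Capacity (∀ k : Fin m, X ((0 : Fin (m+1)).succAbove k)),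
      IsTensorRec ast (fun k => μ ((0 : Fin (m+1)).succAbove k)) σ ∧
      ∀ B : Set (∀ j, X j), IsClosed B →
        τ.cval B = tensorVal₂ ast (μ 0) σ
          ((fun z : ∀ j, X j =>
            ((z 0 : X 0), fun k : Fin m => z ((0 : Fin (m+1)).succAbove k))) '' B)
section Aux

namespace Capacity

variable {X : Type u} [TopologicalSpace X] (ν : Capacity X)

theorem toFun_nonneg (F : Closeds X) : 0 ≤ ν.toFun F :=
  ν.empty' ▸ ν.mono' ⊥ F bot_le

theorem toFun_le_one (F : Closeds X) : ν.toFun F ≤ 1 :=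
  ν.univ' ▸ ν.mono' F ⊤ le_top

theorem cval_nonneg (A : Set X) : 0 ≤ ν.cval A := ν.toFun_nonneg _

theorem cval_le_one (A : Set X) : ν.cval A ≤ 1 := ν.toFun_le_one _

theorem cval_mono {A B : Set X} (h : A ⊆ B) : ν.cval A ≤ ν.cval B :=
  ν.mono' _ _ (closure_mono h)

theorem cval_closed {F : Set X} (h : IsClosed F) : ν.cval F = ν.toFun ⟨F, h⟩ := by
  unfold cval; congr 1; exact Closeds.ext h.closure_eq

theorem cval_coe (F : Closeds X) : ν.cval (F : Set X) = ν.toFun F := by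
  unfold Capacity.cval; congr 1
  exact Closeds.ext (by simp [F.isClosed.closure_eq])

theorem cval_univ : ν.cval (univ : Set X) = 1 := by
  rw [ν.cval_closed isClosed_univ, ← ν.univ']; rfl

theorem cval_le_toFun {A : Set X} {F : Closeds X} (h : A ⊆ (F : Set X)) :
    ν.cval A ≤ ν.toFun F := by
  rw [← ν.cval_coe F]; exact ν.cval_mono h

theorem ovalSet_nonempty (U : Set X) :
    {r : ℝ | ∃ K : Closeds X, (K : Set X) ⊆ U ∧ ν.toFun K = r}.Nonempty :=
  ⟨ν.toFun ⊥, ⊥, by simp, rfl⟩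

theorem ovalSet_bddAbove (U : Set X) :
    BddAbove {r : ℝ | ∃ K : Closeds X, (K : Set X) ⊆ U ∧ ν.toFun K = r} :=
  ⟨1, by rintro r ⟨K, _, rfl⟩; exact ν.toFun_le_one K⟩

theorem toFun_le_oval {U : Set X} {K : Closeds X} (h : (K : Set X) ⊆ U) :
    ν.toFun K ≤ ν.oval U :=
  le_csSup (ν.ovalSet_bddAbove U) ⟨K, h, rfl⟩

theorem oval_nonneg (U : Set X) : 0 ≤ ν.oval U := by
  have := ν.toFun_le_oval (U := U) (K := ⊥) (by simp)
  rw [ν.empty'] at this; exact this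

theorem oval_le_one (U : Set X) : ν.oval U ≤ 1 :=
  csSup_le (ν.ovalSet_nonempty U) (by rintro r ⟨K, _, rfl⟩; exact ν.toFun_le_one K)

theorem lt_oval_iff {U : Set X} {a : ℝ} :
    a < ν.oval U ↔ ∃ K : Closeds X, (K : Set X) ⊆ U ∧ a < ν.toFun K := by
  rw [oval, lt_csSup_iff (ν.ovalSet_bddAbove U) (ν.ovalSet_nonempty U)]
  constructor
  · rintro ⟨r, ⟨K, hK, rfl⟩, hr⟩; exact ⟨K, hK, hr⟩
  · rintro ⟨K, hK, hr⟩; exact ⟨_, ⟨K, hK, rfl⟩, hr⟩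

theorem ext' : ∀ {ν ν' : Capacity X}, ν.toFun = ν'.toFun → ν = ν' := by
  rintro ⟨f, _, _, _, _⟩ ⟨g, _, _, _, _⟩ (rfl : f = g); rfl

end Capacity

namespace Tnorm

variable (ast : Tnorm)

theorem zero_left {t : ℝ} (ht : t ∈ Icc (0:ℝ) 1) : ast.toFun 0 t = 0 := by
  have h01 : (0:ℝ) ∈ Icc (0:ℝ) 1 := ⟨le_refl _, zero_le_one⟩
  have h11 : (1:ℝ) ∈ Icc (0:ℝ) 1 := ⟨zero_le_one, le_refl _⟩
  have h1 : ast.toFun 0 t ≤ ast.toFun 0 1 :=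
    ast.mono' 0 h01 0 h01 t ht 1 h11 le_rfl ht.2
  have h2 := ast.one' 0 h01
  have h3 := (ast.mem' 0 h01 t ht).1
  linarith

theorem zero_right {s : ℝ} (hs : s ∈ Icc (0:ℝ) 1) : ast.toFun s 0 = 0 := by
  have h01 : (0:ℝ) ∈ Icc (0:ℝ) 1 := ⟨le_refl _, zero_le_one⟩
  rw [ast.comm' s hs 0 h01, ast.zero_left hs]

end Tnorm

/-- The subbasic sets `{c | c F < a}` are open for every real `a`. -/
theorem isOpen_setOf_toFun_lt {X : Type u} [TopologicalSpace X] (F : Closeds X) (a : ℝ) :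
    IsOpen {c : Capacity X | c.toFun F < a} := by
  rcases le_or_gt a 0 with ha | ha
  · convert isOpen_empty
    ext c; simp only [mem_setOf_eq, mem_empty_iff_false, iff_false, not_lt]
    exact le_trans ha (c.toFun_nonneg F)
  rcases le_or_gt a 1 with ha1 | ha1
  · exact TopologicalSpace.GenerateOpen.basic _ (Or.inl ⟨F, a, ⟨le_of_lt ha, ha1⟩, rfl⟩)
  · convert isOpen_univ
    ext c; simp only [mem_setOf_eq, mem_univ, iff_true]
    exact lt_of_le_of_lt (c.toFun_le_one F) ha1

/-- The subbasic sets `{c | a < c(U)}` (`U` open) are open for every real `a`. -/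
theorem isOpen_setOf_lt_oval {X : Type u} [TopologicalSpace X] {U : Set X} (hU : IsOpen U)
    (a : ℝ) : IsOpen {c : Capacity X | a < c.oval U} := by
  rcases lt_or_ge a 0 with ha | ha
  · convert isOpen_univ
    ext c; simp only [mem_setOf_eq, mem_univ, iff_true]
    exact lt_of_lt_of_le ha (c.oval_nonneg U)
  rcases le_or_gt a 1 with ha1 | ha1
  · exact TopologicalSpace.GenerateOpen.basic _ (Or.inr ⟨U, hU, a, ⟨ha, ha1⟩, rfl⟩)
  · convert isOpen_empty
    ext c; simp only [mem_setOf_eq, mem_empty_iff_false, iff_false, not_lt]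
    exact le_trans (c.oval_le_one U) (le_of_lt ha1)

end Aux
section Tensor

variable {X : Type u} {Y : Type v} [TopologicalSpace X] [TopologicalSpace Y]

/-- The `t`-cut of the slice capacities. -/
def Gslice (ν₂ : Capacity Y) (B : Set (X × Y)) (t : ℝ) : Set X :=
  {x | t ≤ ν₂.cval {y | (x, y) ∈ B}}

theorem tensorVal₂_eq (ast : Tnorm) (μ₁ : Capacity X) (μ₂ : Capacity Y) (B : Set (X × Y)) :
    tensorVal₂ ast μ₁ μ₂ B =
      sSup {r : ℝ | ∃ t ∈ Icc (0:ℝ) 1, r = ast.toFun (μ₁.cval (Gslice μ₂ B t)) t} := rfl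

theorem Gslice_anti (ν₂ : Capacity Y) (B : Set (X × Y)) {t t' : ℝ} (h : t ≤ t') :
    Gslice ν₂ B t' ⊆ Gslice ν₂ B t := fun _ hx => le_trans h hx

theorem tvSet_nonempty (ast : Tnorm) (μ₁ : Capacity X) (μ₂ : Capacity Y) (B : Set (X × Y)) :
    {r : ℝ | ∃ t ∈ Icc (0:ℝ) 1, r = ast.toFun (μ₁.cval (Gslice μ₂ B t)) t}.Nonempty :=
  ⟨_, 1, ⟨zero_le_one, le_refl _⟩, rfl⟩

theorem tvSet_mem_Icc (ast : Tnorm) (μ₁ : Capacity X) (μ₂ : Capacity Y) (B : Set (X × Y)) :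
    ∀ r ∈ {r : ℝ | ∃ t ∈ Icc (0:ℝ) 1, r = ast.toFun (μ₁.cval (Gslice μ₂ B t)) t},
      r ∈ Icc (0:ℝ) 1 := by
  rintro r ⟨t, ht, rfl⟩
  exact ast.mem' _ ⟨μ₁.cval_nonneg _, μ₁.cval_le_one _⟩ t ht

theorem tvSet_bddAbove (ast : Tnorm) (μ₁ : Capacity X) (μ₂ : Capacity Y) (B : Set (X × Y)) :
    BddAbove {r : ℝ | ∃ t ∈ Icc (0:ℝ) 1, r = ast.toFun (μ₁.cval (Gslice μ₂ B t)) t} :=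
  ⟨1, fun r hr => (tvSet_mem_Icc ast μ₁ μ₂ B r hr).2⟩

theorem term_le_tensorVal₂ (ast : Tnorm) (μ₁ : Capacity X) (μ₂ : Capacity Y) (B : Set (X × Y))
    {t : ℝ} (ht : t ∈ Icc (0:ℝ) 1) :
    ast.toFun (μ₁.cval (Gslice μ₂ B t)) t ≤ tensorVal₂ ast μ₁ μ₂ B :=
  le_csSup (tvSet_bddAbove ast μ₁ μ₂ B) ⟨t, ht, rfl⟩

theorem tensorVal₂_nonneg (ast : Tnorm) (μ₁ : Capacity X) (μ₂ : Capacity Y) (B : Set (X × Y)) :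
    0 ≤ tensorVal₂ ast μ₁ μ₂ B := by
  have h := term_le_tensorVal₂ ast μ₁ μ₂ B (t := 1) ⟨zero_le_one, le_refl _⟩
  have h2 := ast.one' (μ₁.cval (Gslice μ₂ B 1)) ⟨μ₁.cval_nonneg _, μ₁.cval_le_one _⟩
  have h3 := μ₁.cval_nonneg (Gslice μ₂ B 1)
  linarith

theorem tensorVal₂_le_one (ast : Tnorm) (μ₁ : Capacity X) (μ₂ : Capacity Y) (B : Set (X × Y)) :
    tensorVal₂ ast μ₁ μ₂ B ≤ 1 :=
  csSup_le (tvSet_nonempty ast μ₁ μ₂ B) (fun r hr => (tvSet_mem_Icc ast μ₁ μ₂ B r hr).2)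

theorem isClosedMap_fst' [CompactSpace Y] : IsClosedMap (Prod.fst : X × Y → X) := by
  have h : (Prod.fst : X × Y → X) = Prod.snd ∘ (Homeomorph.prodComm X Y) := rfl
  rw [h]
  exact isClosedMap_snd_of_compactSpace.comp (Homeomorph.prodComm X Y).isClosedMap

theorem isOpen_setOf_slice_subset [CompactSpace Y] {D : Set (X × Y)} (hD : IsClosed D)
    {O : Set Y} (hO : IsOpen O) : IsOpen {x : X | {y : Y | (x, y) ∈ D} ⊆ O} := by
  rw [← isClosed_compl_iff]
  have h : {x : X | {y : Y | (x, y) ∈ D} ⊆ O}ᶜ = Prod.fst '' (D ∩ (univ ×ˢ Oᶜ)) := by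
    ext x
    simp only [mem_compl_iff, mem_setOf_eq, not_subset, mem_image, mem_inter_iff, mem_prod,
      mem_univ, true_and, mem_compl_iff, Prod.exists]
    constructor
    · rintro ⟨y, hy1, hy2⟩; exact ⟨x, y, ⟨hy1, hy2⟩, rfl⟩
    · rintro ⟨x', y, ⟨hy1, hy2⟩, rfl⟩; exact ⟨y, hy1, hy2⟩
  rw [h]
  exact isClosedMap_fst' _ (hD.inter (isClosed_univ.prod (isClosed_compl_iff.2 hO)))

theorem slice_isClosed {D : Set (X × Y)} (hD : IsClosed D) (x : X) :
    IsClosed {y : Y | (x, y) ∈ D} := hD.preimage (Continuous.prodMk_right x)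

theorem Gslice_isClosed [CompactSpace Y] (ν₂ : Capacity Y) {D : Set (X × Y)}
    (hD : IsClosed D) (t : ℝ) : IsClosed (Gslice ν₂ D t) := by
  rw [← isOpen_compl_iff]
  rw [isOpen_iff_forall_mem_open]
  intro x hx
  rw [mem_compl_iff, Gslice, mem_setOf_eq, not_le] at hx
  rw [ν₂.cval_closed (slice_isClosed hD x)] at hx
  obtain ⟨O, hO, hsub, hB⟩ := ν₂.usc' _ t hx
  refine ⟨{z : X | {y : Y | (z, y) ∈ D} ⊆ O}, ?_, isOpen_setOf_slice_subset hD hO, hsub⟩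
  intro z hz
  rw [mem_compl_iff, Gslice, mem_setOf_eq, not_le]
  rw [ν₂.cval_closed (slice_isClosed hD z)]
  exact hB _ hz

/-- Core stability lemma: if the `t`-cut for `ν₂` is inside an open set `W`, then the same
holds for all capacities in a suitable open neighbourhood of `ν₂`. -/
theorem core2 [CompactSpace X] [CompactSpace Y] [T2Space Y] (ν₂ : Capacity Y)
    {D : Set (X × Y)} (hD : IsClosed D) (t : ℝ) {W : Set X} (hW : IsOpen W)
    (hGW : Gslice ν₂ D t ⊆ W) :
    ∃ V : Set (Capacity Y), IsOpen V ∧ ν₂ ∈ V ∧ ∀ ν₂' ∈ V, Gslice ν₂' D t ⊆ W := by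
  have hK : IsCompact Wᶜ := hW.isClosed_compl.isCompact
  have H : ∀ x ∈ Wᶜ, ∃ (N : Set X) (E : Closeds Y), IsOpen N ∧ x ∈ N ∧ ν₂.toFun E < t ∧
      ∀ z ∈ N, {y : Y | (z, y) ∈ D} ⊆ (E : Set Y) := by
    intro x hxW
    have hx : ¬ x ∈ Gslice ν₂ D t := fun h => hxW (hGW h)
    rw [Gslice, mem_setOf_eq, not_le, ν₂.cval_closed (slice_isClosed hD x)] at hx
    obtain ⟨O, hO, hsub, hB⟩ := ν₂.usc' _ t hx
    obtain ⟨U, hUo, hslU, hclU⟩ := normal_exists_closure_subset (slice_isClosed hD x) hO hsub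
    refine ⟨{z : X | {y : Y | (z, y) ∈ D} ⊆ U}, ⟨closure U, isClosed_closure⟩,
      isOpen_setOf_slice_subset hD hUo, hslU, hB _ hclU, ?_⟩
    intro z hz
    exact hz.trans subset_closure
  choose! N E hNo hxN hEt hND using H
  obtain ⟨S, hS⟩ := hK.elim_finite_subcover (fun x : ↥Wᶜ => N ↑x)
    (fun x => hNo ↑x x.2) (fun z hz => mem_iUnion.2 ⟨⟨z, hz⟩, hxN z hz⟩)
  refine ⟨⋂ x ∈ S, {ν' : Capacity Y | ν'.toFun (E ↑x) < t}, ?_, ?_, ?_⟩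
  · exact isOpen_biInter_finset (fun x _ => isOpen_setOf_toFun_lt _ _)
  · exact mem_iInter₂.2 (fun x _ => hEt ↑x x.2)
  · intro ν₂' hν₂' z hz
    by_contra hzW
    obtain ⟨x, hxS, hzN⟩ := mem_iUnion₂.1 (hS hzW)
    have h1 : ν₂'.cval {y : Y | (z, y) ∈ D} ≤ ν₂'.toFun (E ↑x) :=
      ν₂'.cval_le_toFun (hND ↑x x.2 z hzN)
    have h2 : ν₂'.toFun (E ↑x) < t := (mem_iInter₂.1 hν₂' x hxS)
    exact absurd hz (by rw [Gslice, mem_setOf_eq, not_le]; linarith)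

end Tensor
section ClaimA

variable {X : Type u} {Y : Type v} [TopologicalSpace X] [TopologicalSpace Y]

theorem isOpen_tensorVal_lt [CompactSpace X] [T2Space X] [CompactSpace Y] [T2Space Y]
    {ast : Tnorm} (hast : ast.Cont) {D : Set (X × Y)} (hD : IsClosed D) (a : ℝ) :
    IsOpen {p : Capacity X × Capacity Y | tensorVal₂ ast p.1 p.2 D < a} := by
  rw [isOpen_iff_forall_mem_open]
  rintro ⟨ν₁, ν₂⟩ hp
  simp only [mem_setOf_eq] at hp
  set V₀ := tensorVal₂ ast ν₁ ν₂ D with hV₀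
  set ε := (a - V₀) / 2 with hε
  have hεpos : 0 < ε := by simp only [hε]; linarith
  -- uniform continuity on the unit square
  have huc := (isCompact_Icc.prod isCompact_Icc).uniformContinuousOn_of_continuous hast
  rw [Metric.uniformContinuousOn_iff] at huc
  obtain ⟨δ, hδpos, hucd⟩ := huc ε hεpos
  set η := δ / 2 with hη
  have hηpos : 0 < η := by simp only [hη]; linarith
  set N := Nat.ceil (1 / η) with hN
  have hNpos : (0:ℝ) < N := by
    have : 1 ≤ N := Nat.one_le_ceil_iff.2 (by positivity)
    exact_mod_cast Nat.lt_of_lt_of_le Nat.zero_lt_one this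
  have hNη : 1 / (N:ℝ) ≤ η := by
    rw [div_le_iff₀ hNpos]
    have h1 : (1:ℝ)/η ≤ N := Nat.le_ceil _
    calc (1:ℝ) = η * (1/η) := by field_simp
    _ ≤ η * N := mul_le_mul_of_nonneg_left h1 hηpos.le
  -- data for each grid point
  set s : ℕ → ℝ := fun i => ν₁.cval (Gslice ν₂ D ((i:ℝ)/N)) with hs
  have H : ∀ i : ℕ, ∃ (F : Closeds X) (V : Set (Capacity Y)), ν₁.toFun F < s i + η ∧
      IsOpen V ∧ ν₂ ∈ V ∧ ∀ ν₂' ∈ V, Gslice ν₂' D ((i:ℝ)/N) ⊆ (F : Set X) := by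
    intro i
    have hlt : ν₁.toFun ⟨closure (Gslice ν₂ D ((i:ℝ)/N)), isClosed_closure⟩ < s i + η :=
      lt_add_of_pos_right _ hηpos
    obtain ⟨O, hO, hsub, hB⟩ := ν₁.usc' _ _ hlt
    obtain ⟨W, hWo, hGW, hclW⟩ := normal_exists_closure_subset isClosed_closure hO hsub
    obtain ⟨V, hVo, hν₂V, hV⟩ := core2 ν₂ hD ((i:ℝ)/N) hWo (subset_closure.trans hGW)
    refine ⟨⟨closure W, isClosed_closure⟩, V, hB _ hclW, hVo, hν₂V, ?_⟩
    intro ν₂' hν₂'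
    exact (hV ν₂' hν₂').trans subset_closure
  choose F V hF hVo hν₂V hGF using H
  refine ⟨(⋂ i ∈ Finset.range (N+1), {ν₁' : Capacity X | ν₁'.toFun (F i) < s i + η}) ×ˢ
    (⋂ i ∈ Finset.range (N+1), V i), ?_, ?_, ?_⟩
  · -- contained in the target set
    rintro ⟨ν₁', ν₂'⟩ ⟨h1, h2⟩
    simp only [mem_setOf_eq]
    have hbound : tensorVal₂ ast ν₁' ν₂' D ≤ V₀ + ε := by
      apply csSup_le (tvSet_nonempty ast ν₁' ν₂' D)
      rintro r ⟨t, ht, rfl⟩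
      set i := ⌊t * N⌋₊ with hi
      have hiN : i ≤ N := by
        have h1' : t * N ≤ (N:ℝ) := by
          nlinarith [ht.2, hNpos]
        calc i ≤ ⌊(N:ℝ)⌋₊ := Nat.floor_le_floor h1'
        _ = N := Nat.floor_natCast N
      have hiN' : (i:ℝ)/N ≤ 1 := by
        rw [div_le_one hNpos]; exact_mod_cast hiN
      have hti : (i:ℝ)/N ≤ t := by
        rw [div_le_iff₀ hNpos]
        exact Nat.floor_le (mul_nonneg ht.1 hNpos.le)
      have hti2 : t ≤ (i:ℝ)/N + η := by
        have h1' : t * N < (i:ℝ) + 1 := Nat.lt_floor_add_one (t * N)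
        have h2' : t ≤ ((i:ℝ) + 1)/N := by
          rw [le_div_iff₀ hNpos]; linarith
        calc t ≤ ((i:ℝ) + 1)/N := h2'
        _ = (i:ℝ)/N + 1/N := by ring
        _ ≤ (i:ℝ)/N + η := by linarith
      have hirange : i ∈ Finset.range (N+1) := Finset.mem_range.2 (Nat.lt_succ_of_le hiN)
      set c := ν₁'.cval (Gslice ν₂' D t) with hc
      have hν₂'Vi : ν₂' ∈ V i := mem_iInter₂.1 h2 i hirange
      have hc1 : c ≤ ν₁'.toFun (F i) :=
        ν₁'.cval_le_toFun ((Gslice_anti ν₂' D hti).trans (hGF i ν₂' hν₂'Vi))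
      have hc2 : c < s i + η := lt_of_le_of_lt hc1 (mem_iInter₂.1 h1 i hirange)
      have hc0 : 0 ≤ c := ν₁'.cval_nonneg _
      have hcle1 : c ≤ 1 := ν₁'.cval_le_one _
      have hsi0 : 0 ≤ s i := ν₁.cval_nonneg _
      have hsi1 : s i ≤ 1 := ν₁.cval_le_one _
      set sstar := min (s i + η) 1 with hsstar
      set tstar := min ((i:ℝ)/N + η) 1 with htstar
      have hsstar_mem : sstar ∈ Icc (0:ℝ) 1 :=
        ⟨le_min (by linarith) zero_le_one, min_le_right _ _⟩
      have htstar_mem : tstar ∈ Icc (0:ℝ) 1 := by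
        constructor
        · apply le_min _ zero_le_one
          positivity
        · exact min_le_right _ _
      have hr1 : ast.toFun c t ≤ ast.toFun sstar tstar := by
        apply ast.mono' c ⟨hc0, hcle1⟩ sstar hsstar_mem t ht tstar htstar_mem
        · exact le_min hc2.le hcle1
        · exact le_min hti2 ht.2
      have hr2 : ast.toFun sstar tstar < ast.toFun (s i) ((i:ℝ)/N) + ε := by
        have hdist : dist ((sstar, tstar) : ℝ × ℝ) ((s i, (i:ℝ)/N) : ℝ × ℝ) < δ := by
          rw [Prod.dist_eq]
          have h1' : dist sstar (s i) ≤ η := by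
            rw [Real.dist_eq, abs_le]
            constructor
            · have : s i ≤ sstar := le_min (by linarith) hsi1
              linarith
            · have : sstar ≤ s i + η := min_le_left _ _
              linarith
          have h2' : dist tstar ((i:ℝ)/N) ≤ η := by
            rw [Real.dist_eq, abs_le]
            constructor
            · have : (i:ℝ)/N ≤ tstar := le_min (by linarith) hiN'
              linarith
            · have : tstar ≤ (i:ℝ)/N + η := min_le_left _ _
              linarith
          have : max (dist sstar (s i)) (dist tstar ((i:ℝ)/N)) ≤ η :=
            max_le h1' h2'
          calc dist sstar (s i) ⊔ dist tstar ((i:ℝ)/N) ≤ η := this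
          _ < δ := by simp only [hη]; linarith
        have hmem1 : ((sstar, tstar) : ℝ × ℝ) ∈ Icc (0:ℝ) 1 ×ˢ Icc (0:ℝ) 1 :=
          ⟨hsstar_mem, htstar_mem⟩
        have hmem2 : (((s i), (i:ℝ)/N) : ℝ × ℝ) ∈ Icc (0:ℝ) 1 ×ˢ Icc (0:ℝ) 1 :=
          ⟨⟨hsi0, hsi1⟩, ⟨by positivity, hiN'⟩⟩
        have := hucd _ hmem1 _ hmem2 hdist
        rw [Real.dist_eq, abs_lt] at this
        simp only at this ⊢
        linarith [this.1, this.2]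
      have hr3 : ast.toFun (s i) ((i:ℝ)/N) ≤ V₀ :=
        term_le_tensorVal₂ ast ν₁ ν₂ D ⟨by positivity, hiN'⟩
      linarith
    have : V₀ + ε < a := by simp only [hε]; linarith
    linarith
  · exact IsOpen.prod (isOpen_biInter_finset (fun i _ => isOpen_setOf_toFun_lt _ _))
      (isOpen_biInter_finset (fun i _ => hVo i))
  · exact ⟨mem_iInter₂.2 (fun i _ => hF i), mem_iInter₂.2 (fun i _ => hν₂V i)⟩

end ClaimA
section ClaimB

variable {X : Type u} {Y : Type v} [TopologicalSpace X] [TopologicalSpace Y]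

theorem isOpen_exists_tensorVal_gt [CompactSpace X] [T2Space X] [CompactSpace Y] [T2Space Y]
    {ast : Tnorm} (hast : ast.Cont) {Om : Set (X × Y)} (hOm : IsOpen Om) (a : ℝ) :
    IsOpen {p : Capacity X × Capacity Y |
      ∃ D, IsClosed D ∧ D ⊆ Om ∧ a < tensorVal₂ ast p.1 p.2 D} := by
  rcases lt_or_ge a 0 with ha0 | ha0
  · convert isOpen_univ
    ext p; simp only [mem_setOf_eq, mem_univ, iff_true]
    exact ⟨∅, isClosed_empty, empty_subset _,
      lt_of_lt_of_le ha0 (tensorVal₂_nonneg ast p.1 p.2 ∅)⟩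
  rw [isOpen_iff_forall_mem_open]
  rintro ⟨ν₁, ν₂⟩ ⟨D, hD, hDOm, ha⟩
  simp only [mem_setOf_eq] at ha
  obtain ⟨r, ⟨t, ht, rfl⟩, har⟩ :=
    exists_lt_of_lt_csSup (tvSet_nonempty ast ν₁ ν₂ D) ha
  set s := ν₁.cval (Gslice ν₂ D t) with hsdef
  have hs01 : s ∈ Icc (0:ℝ) 1 := ⟨ν₁.cval_nonneg _, ν₁.cval_le_one _⟩
  have hspos : 0 < s := by
    rcases lt_or_eq_of_le hs01.1 with h | h
    · exact h
    · exfalso; rw [← h, ast.zero_left ht] at har; linarith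
  have htpos : 0 < t := by
    rcases lt_or_eq_of_le ht.1 with h | h
    · exact h
    · exfalso; rw [← h, ast.zero_right hs01] at har; linarith
  -- uniform continuity
  have huc := (isCompact_Icc.prod isCompact_Icc).uniformContinuousOn_of_continuous hast
  rw [Metric.uniformContinuousOn_iff] at huc
  obtain ⟨δ, hδpos, hucd⟩ := huc (ast.toFun s t - a) (by linarith)
  set δ' := min (δ/2) (min s t) with hδ'def
  have hδ'pos : 0 < δ' := lt_min (by linarith) (lt_min hspos htpos)
  have hδ's : δ' ≤ s := (min_le_right _ _).trans (min_le_left _ _)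
  have hδ't : δ' ≤ t := (min_le_right _ _).trans (min_le_right _ _)
  have hδ'δ : δ' < δ := lt_of_le_of_lt (min_le_left _ _) (by linarith)
  have hkey : a < ast.toFun (s - δ') (t - δ') := by
    have hm1a : (s - δ') ∈ Icc (0:ℝ) 1 := ⟨by linarith, by linarith [hs01.2]⟩
    have hm1b : (t - δ') ∈ Icc (0:ℝ) 1 := ⟨by linarith, by linarith [ht.2]⟩
    have hmem1 : ((s - δ', t - δ') : ℝ × ℝ) ∈ Icc (0:ℝ) 1 ×ˢ Icc (0:ℝ) 1 := ⟨hm1a, hm1b⟩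
    have hmem2 : ((s, t) : ℝ × ℝ) ∈ Icc (0:ℝ) 1 ×ˢ Icc (0:ℝ) 1 := ⟨hs01, ht⟩
    have hdist : dist ((s - δ', t - δ') : ℝ × ℝ) ((s, t) : ℝ × ℝ) < δ := by
      rw [Prod.dist_eq]
      have h1 : dist (s - δ') s = δ' := by
        rw [Real.dist_eq]; rw [abs_of_nonpos (by linarith)]; ring
      have h2 : dist (t - δ') t = δ' := by
        rw [Real.dist_eq]; rw [abs_of_nonpos (by linarith)]; ring
      rw [h1, h2, max_self]; exact hδ'δ
    have := hucd _ hmem1 _ hmem2 hdist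
    rw [Real.dist_eq, abs_lt] at this
    simp only at this
    linarith [this.1]
  -- geometric data
  have hGcl : IsClosed (Gslice ν₂ D t) := Gslice_isClosed ν₂ hD t
  obtain ⟨Om', hOm'o, hDOm', hclOm'⟩ := normal_exists_closure_subset hD hOm hDOm
  have H : ∀ x ∈ Gslice ν₂ D t, ∃ (Nx : Set X) (Wx : Set Y), IsOpen Nx ∧ x ∈ Nx ∧
      IsOpen Wx ∧ t - δ' < ν₂.oval Wx ∧ ∀ z ∈ Nx, ∀ y ∈ Wx, (z, y) ∈ Om := by
    intro x hxG
    set Wx := {y : Y | (x, y) ∈ Om'} with hWxdef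
    have hWxo : IsOpen Wx := hOm'o.preimage (Continuous.prodMk_right x)
    have hoval : t - δ' < ν₂.oval Wx := by
      have h1 : ν₂.toFun ⟨{y : Y | (x, y) ∈ D}, slice_isClosed hD x⟩ ≤ ν₂.oval Wx :=
        ν₂.toFun_le_oval (fun y hy => hDOm' hy)
      have h2 : t ≤ ν₂.cval {y : Y | (x, y) ∈ D} := hxG
      rw [ν₂.cval_closed (slice_isClosed hD x)] at h2
      linarith
    have htube : ({x} : Set X) ×ˢ closure Wx ⊆ Om := by
      rintro ⟨z, y⟩ ⟨hz, hy⟩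
      have hz' : z = x := hz
      have hy' : y ∈ closure Wx := hy
      have hcl2 : IsClosed {y : Y | (x, y) ∈ closure Om'} :=
        (isClosed_closure).preimage (Continuous.prodMk_right x)
      have hmem : closure Wx ⊆ {y : Y | (x, y) ∈ closure Om'} :=
        closure_minimal (fun w hw => subset_closure hw) hcl2
      rw [hz']
      exact hclOm' (hmem hy')
    obtain ⟨u, v, hu, hv, hxu, hWv, huv⟩ := generalized_tube_lemma isCompact_singleton
      (isClosed_closure.isCompact) hOm htube
    refine ⟨u, Wx, hu, hxu rfl, hWxo, hoval, ?_⟩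
    intro z hz y hy
    exact huv ⟨hz, hWv (subset_closure hy)⟩
  choose! Nx Wx hNo hxN hWo hWoval hNW using H
  have hGcpt : IsCompact (Gslice ν₂ D t) := hGcl.isCompact
  obtain ⟨S, hS⟩ := hGcpt.elim_finite_subcover (fun x : ↥(Gslice ν₂ D t) => Nx ↑x)
    (fun x => hNo ↑x x.2) (fun z hz => mem_iUnion.2 ⟨⟨z, hz⟩, hxN z hz⟩)
  set U := ⋃ x ∈ S, Nx ↑x with hUdef
  have hUo : IsOpen U := isOpen_biUnion (fun x _ => hNo ↑x x.2)
  refine ⟨{ν₁' : Capacity X | s - δ' < ν₁'.oval U} ×ˢ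
    (⋂ x ∈ S, {ν₂' : Capacity Y | t - δ' < ν₂'.oval (Wx ↑x)}), ?_, ?_, ?_⟩
  · -- contained in the target
    rintro ⟨ν₁', ν₂'⟩ ⟨h1, h2⟩
    simp only [mem_setOf_eq] at h1
    obtain ⟨K₁, hK₁U, hK₁⟩ := ν₁'.lt_oval_iff.1 h1
    obtain ⟨M, hMcpt, hMsub, hMeq⟩ := (K₁.isClosed.isCompact).finite_compact_cover S
      (fun x : ↥(Gslice ν₂ D t) => Nx ↑x) (fun x _ => hNo ↑x x.2) (by rwa [← hUdef])
    have hL : ∀ x : ↥(Gslice ν₂ D t), x ∈ S →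
        ∃ L : Closeds Y, (L : Set Y) ⊆ Wx ↑x ∧ t - δ' < ν₂'.toFun L := by
      intro x hxS
      exact ν₂'.lt_oval_iff.1 (mem_iInter₂.1 h2 x hxS)
    choose! L hLW hLt using hL
    set D'' := ⋃ x ∈ S, (M x) ×ˢ (L x : Set Y) with hD''def
    have hD''cl : IsClosed D'' :=
      S.finite_toSet.isClosed_biUnion (fun x hx => ((hMcpt x).isClosed.prod (L x).isClosed))
    have hD''Om : D'' ⊆ Om := by
      rintro ⟨z, y⟩ hzy
      obtain ⟨x, hxS, hmem⟩ := mem_iUnion₂.1 hzy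
      exact hNW ↑x x.2 z (hMsub x hmem.1) y (hLW x hxS hmem.2)
    refine ⟨D'', hD''cl, hD''Om, ?_⟩
    have htδ : t - δ' ∈ Icc (0:ℝ) 1 := ⟨by linarith, by linarith [ht.2]⟩
    have hKG : (K₁ : Set X) ⊆ Gslice ν₂' D'' (t - δ') := by
      intro z hz
      rw [hMeq] at hz
      obtain ⟨x, hxS, hzM⟩ := mem_iUnion₂.1 hz
      have hsub : (L x : Set Y) ⊆ {y : Y | (z, y) ∈ D''} := by
        intro y hy
        exact mem_iUnion₂.2 ⟨x, hxS, ⟨hzM, hy⟩⟩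
      have : ν₂'.toFun (L x) ≤ ν₂'.cval {y : Y | (z, y) ∈ D''} := by
        rw [← ν₂'.cval_coe (L x)]
        exact ν₂'.cval_mono hsub
      have h3 := hLt x hxS
      exact le_of_lt (lt_of_lt_of_le h3 this)
    have hc : s - δ' ≤ ν₁'.cval (Gslice ν₂' D'' (t - δ')) := by
      have := ν₁'.cval_mono hKG
      rw [ν₁'.cval_coe K₁] at this
      linarith
    have hterm : a < ast.toFun (ν₁'.cval (Gslice ν₂' D'' (t - δ'))) (t - δ') := by
      have hmono : ast.toFun (s - δ') (t - δ') ≤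
          ast.toFun (ν₁'.cval (Gslice ν₂' D'' (t - δ'))) (t - δ') :=
        ast.mono' (s - δ') ⟨by linarith, by linarith [hs01.2]⟩ _
          ⟨ν₁'.cval_nonneg _, ν₁'.cval_le_one _⟩ (t - δ') htδ (t - δ') htδ hc le_rfl
      linarith
    exact lt_of_lt_of_le hterm (term_le_tensorVal₂ ast ν₁' ν₂' D'' htδ)
  · exact IsOpen.prod (isOpen_setOf_lt_oval hUo _)
      (isOpen_biInter_finset (fun x hx => isOpen_setOf_lt_oval (hWo ↑x x.2) _))
  · constructor
    · simp only [mem_setOf_eq]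
      have h1 : ν₁.toFun ⟨Gslice ν₂ D t, hGcl⟩ ≤ ν₁.oval U := ν₁.toFun_le_oval hS
      have h2 : s = ν₁.toFun ⟨Gslice ν₂ D t, hGcl⟩ := ν₁.cval_closed hGcl
      linarith
    · exact mem_iInter₂.2 (fun x hxS => hWoval ↑x x.2)

end ClaimB
section Assembly

open scoped Classical

theorem capacity_subsingleton {Z : Type u} [TopologicalSpace Z] [Subsingleton Z] :
    Subsingleton (Capacity Z) := by
  constructor
  intro ν ν'
  apply Capacity.ext'
  funext F
  rcases eq_empty_or_nonempty (F : Set Z) with h | h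
  · have hbot : F = ⊥ := Closeds.ext (by rw [h]; rfl)
    rw [hbot, ν.empty', ν'.empty']
  · have htop : F = ⊤ := by
      apply Closeds.ext
      obtain ⟨z, hz⟩ := h
      have : (F : Set Z) = univ := eq_univ_of_forall (fun w => (Subsingleton.elim z w) ▸ hz)
      rw [this]; rfl
    rw [htop, ν.univ', ν'.univ']

theorem isTensorRec_unique (ast : Tnorm) : ∀ {m : ℕ} {X : Fin m → Type u}
    [inst : ∀ j, TopologicalSpace (X j)] {μ : ∀ j, Capacity (X j)}
    {τ τ' : Capacity (∀ j, X j)},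
    IsTensorRec ast μ τ → IsTensorRec ast μ τ' → τ = τ' := by
  intro m
  induction m with
  | zero =>
    intro X inst μ τ τ' _ _
    haveI : Subsingleton (∀ j : Fin 0, X j) := ⟨fun a b => funext fun j => j.elim0⟩
    haveI := capacity_subsingleton (Z := ∀ j : Fin 0, X j)
    exact Subsingleton.elim τ τ'
  | succ m ih =>
    intro X inst μ τ τ' h h'
    obtain ⟨σ, hσ, hval⟩ := h
    obtain ⟨σ', hσ', hval'⟩ := h'
    have hσσ' : σ = σ' := ih hσ hσ'
    subst hσσ'
    apply Capacity.ext'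
    funext F
    have h1 := hval (F : Set _) F.isClosed
    have h2 := hval' (F : Set _) F.isClosed
    rw [τ.cval_coe F] at h1
    rw [τ'.cval_coe F] at h2
    rw [h1, h2]

/-- An explicit capacity on a nonempty space. -/
noncomputable def fullCapacity (Z : Type u) [TopologicalSpace Z] [Nonempty Z] :
    Capacity Z where
  toFun F := if (F : Set Z).Nonempty then 1 else 0
  empty' := by
    show (if (((⊥ : Closeds Z) : Set Z)).Nonempty then (1:ℝ) else 0) = 0
    rw [if_neg]
    rw [show ((⊥ : Closeds Z) : Set Z) = ∅ from rfl]
    exact not_nonempty_empty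
  univ' := by
    show (if (((⊤ : Closeds Z) : Set Z)).Nonempty then (1:ℝ) else 0) = 1
    rw [if_pos]
    rw [show ((⊤ : Closeds Z) : Set Z) = univ from rfl]
    exact univ_nonempty
  mono' F G h := by
    show (if ((F : Set Z)).Nonempty then (1:ℝ) else 0) ≤
      (if ((G : Set Z)).Nonempty then (1:ℝ) else 0)
    by_cases hF : (F : Set Z).Nonempty
    · rw [if_pos hF, if_pos (hF.mono (SetLike.coe_subset_coe.2 h))]
    · rw [if_neg hF]
      split <;> norm_num
  usc' F a ha := by
    have ha' : (if ((F : Set Z)).Nonempty then (1:ℝ) else 0) < a := ha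
    by_cases hF : (F : Set Z).Nonempty
    · rw [if_pos hF] at ha'
      refine ⟨univ, isOpen_univ, subset_univ _, fun B _ => ?_⟩
      show (if ((B : Set Z)).Nonempty then (1:ℝ) else 0) < a
      exact lt_of_le_of_lt (by split <;> norm_num) ha'
    · rw [if_neg hF] at ha'
      refine ⟨∅, isOpen_empty, ?_, ?_⟩
      · rw [not_nonempty_iff_eq_empty] at hF; rw [hF]
      · intro B hB
        show (if ((B : Set Z)).Nonempty then (1:ℝ) else 0) < a
        have hBe : (B : Set Z) = ∅ := subset_empty_iff.1 hB
        rw [if_neg (by rw [hBe]; exact not_nonempty_empty)]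
        exact ha'

theorem main_cont : ∀ (m : ℕ) (X : Fin m → Type u) [inst1 : ∀ j, TopologicalSpace (X j)]
    [inst2 : ∀ j, CompactSpace (X j)] [inst3 : ∀ j, T2Space (X j)]
    (ast : Tnorm) (hast : ast.Cont)
    (T : (∀ j, Capacity (X j)) → Capacity (∀ j, X j))
    (hT : ∀ μ, IsTensorRec ast μ (T μ)), Continuous T := by
  intro m
  induction m with
  | zero =>
    intro X _ _ _ ast hast T hT
    haveI : Subsingleton (∀ j : Fin 0, Capacity (X j)) := ⟨fun a b => funext fun j => j.elim0⟩
    haveI := Subsingleton.discreteTopology (α := ∀ j : Fin 0, Capacity (X j))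
    exact continuous_of_discreteTopology
  | succ m ih =>
    intro X inst1 inst2 inst3 ast hast T hT
    rcases isEmpty_or_nonempty (X 0) with hE | hNE
    · haveI : IsEmpty (Capacity (X 0)) := by
        constructor; intro ν
        have h1 : (⊥ : Closeds (X 0)) = ⊤ := Closeds.ext (by
          rw [show ((⊥ : Closeds (X 0)) : Set (X 0)) = ∅ from rfl,
            show ((⊤ : Closeds (X 0)) : Set (X 0)) = univ from rfl]
          exact (eq_empty_of_isEmpty univ).symm)
        have h2 := ν.empty'
        rw [h1, ν.univ'] at h2
        norm_num at h2
      haveI : IsEmpty (∀ j, Capacity (X j)) := ⟨fun f => IsEmpty.elim ‹_› (f 0)⟩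
      haveI := Subsingleton.discreteTopology (α := (∀ j, Capacity (X j)))
      exact continuous_of_discreteTopology
    · set X' : Fin m → Type u := fun k => X ((0 : Fin (m+1)).succAbove k) with hX'
      let ν₀ : Capacity (X 0) := fullCapacity (X 0)
      let extend : (∀ k, Capacity (X' k)) → (∀ j, Capacity (X j)) :=
        fun μ' => Fin.cons ν₀ (fun k => μ' k)
      have hextend_tail : ∀ μ' : (∀ k, Capacity (X' k)),
          (fun k => extend μ' ((0 : Fin (m+1)).succAbove k)) = μ' := by
        intro μ'; funext k
        show Fin.cons (α := fun j => Capacity (X j)) ν₀ (fun k => μ' k) k.succ = μ' k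
        exact Fin.cons_succ (α := fun j => Capacity (X j)) ν₀ (fun k => μ' k) k
      -- the n-fold tensor product of the tail
      have hex : ∀ μ' : (∀ k, Capacity (X' k)), ∃ σ : Capacity (∀ k, X' k),
          IsTensorRec ast μ' σ := by
        intro μ'
        obtain ⟨σ, h1, _⟩ := hT (extend μ')
        rw [hextend_tail μ'] at h1
        exact ⟨σ, h1⟩
      let T' : (∀ k, Capacity (X' k)) → Capacity (∀ k, X' k) :=
        fun μ' => Classical.choose (hex μ')
      have hT'rec : ∀ μ', IsTensorRec ast μ' (T' μ') :=
        fun μ' => Classical.choose_spec (hex μ')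
      have hcontT' : Continuous T' := ih X' ast hast T' hT'rec
      -- the head-and-tail map on capacities
      let pairmap : (∀ j, Capacity (X j)) → Capacity (X 0) × Capacity (∀ k, X' k) :=
        fun μ => (μ 0, T' (fun k => μ ((0 : Fin (m+1)).succAbove k)))
      have hpaircont : Continuous pairmap :=
        (continuous_apply 0).prodMk
          (hcontT'.comp (continuous_pi (fun k => continuous_apply _)))
      -- the coordinate splitting map
      let emap : (∀ j, X j) → X 0 × (∀ k, X' k) :=
        fun z => ((z 0 : X 0), fun k : Fin m => z ((0 : Fin (m+1)).succAbove k))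
      let eqv : (∀ j, X j) ≃ (X 0 × ∀ k, X' k) := (Fin.insertNthEquiv X 0).symm
      have hemap : emap = ⇑eqv := rfl
      have econt : Continuous emap :=
        (continuous_apply 0).prodMk (continuous_pi (fun k => continuous_apply _))
      have eclosed : IsClosedMap emap := econt.isClosedMap
      -- the key identity
      have key : ∀ (μ : ∀ j, Capacity (X j)) (B : Set (∀ j, X j)), IsClosed B →
          (T μ).cval B = tensorVal₂ ast (μ 0)
            (T' (fun k => μ ((0 : Fin (m+1)).succAbove k))) (emap '' B) := by
        intro μ B hB
        obtain ⟨σ, h1, h2⟩ := hT μ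
        have hu : σ = T' (fun k => μ ((0 : Fin (m+1)).succAbove k)) :=
          isTensorRec_unique ast h1 (hT'rec _)
        rw [h2 B hB, hu]
      -- continuity via the subbase
      apply continuous_generateFrom_iff.mpr
      rintro s (⟨F, a, ha, rfl⟩ | ⟨U, hU, a, ha, rfl⟩)
      · have hpre : T ⁻¹' {c | c.toFun F < a} =
            pairmap ⁻¹' {p | tensorVal₂ ast p.1 p.2 (emap '' (F : Set _)) < a} := by
          ext μ
          simp only [mem_preimage, mem_setOf_eq]
          have h1 := key μ (F : Set _) F.isClosed
          rw [(T μ).cval_coe F] at h1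
          rw [h1]
        rw [hpre]
        exact (isOpen_tensorVal_lt hast (eclosed _ F.isClosed) a).preimage hpaircont
      · have hpre : T ⁻¹' {c | a < c.oval U} =
            pairmap ⁻¹' {p | ∃ D, IsClosed D ∧ D ⊆ emap '' U ∧
              a < tensorVal₂ ast p.1 p.2 D} := by
          ext μ
          simp only [mem_preimage, mem_setOf_eq]
          rw [Capacity.lt_oval_iff]
          constructor
          · rintro ⟨K, hKU, hK⟩
            refine ⟨emap '' (K : Set _), eclosed _ K.isClosed, image_mono hKU, ?_⟩
            have h1 := key μ (K : Set _) K.isClosed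
            rw [(T μ).cval_coe K] at h1
            rwa [h1] at hK
          · rintro ⟨D, hDcl, hDU, hD⟩
            refine ⟨⟨emap ⁻¹' D, hDcl.preimage econt⟩, ?_, ?_⟩
            · have himg : emap ⁻¹' (emap '' U) = U := by
                rw [hemap]; exact preimage_image_eq U eqv.injective
              exact (preimage_mono hDU).trans himg.subset
            · have himg : emap '' (emap ⁻¹' D) = D := by
                rw [hemap]; exact image_preimage_eq D eqv.surjective
              have h1 := key μ (emap ⁻¹' D) (hDcl.preimage econt)
              rw [(T μ).cval_closed (hDcl.preimage econt)] at h1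
              rw [himg] at h1
              rwa [h1]
        rw [hpre]
        have hUopen : IsOpen (emap '' U) := by
          have hcompl : emap '' Uᶜ = (emap '' U)ᶜ := by
            rw [hemap]; exact image_compl_eq eqv.bijective
          rw [← compl_compl (emap '' U), ← hcompl]
          exact (eclosed _ hU.isClosed_compl).isOpen_compl
        exact (isOpen_exists_tensorVal_gt hast hUopen a).preimage hpaircont

end Assembly
/-- For compacta `X₁, …, Xₙ` and a continuous t-norm `∗`, the `n`-fold
tensor product map `⊛̃ : MX₁ × … × MXₙ → M(X₁ × … × Xₙ)` generated by `∗` is continuous. -/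
theorem tensor_product_continuous {m : ℕ} (X : Fin m → Type u)
    [∀ j, TopologicalSpace (X j)] [∀ j, CompactSpace (X j)] [∀ j, T2Space (X j)]
    (ast : Tnorm) (hast : ast.Cont)
    (T : (∀ j, Capacity (X j)) → Capacity (∀ j, X j))
    (hT : ∀ μ : ∀ j, Capacity (X j), IsTensorRec ast μ (T μ)) :
    Continuous T := by
  exact main_cont m X ast hast T hT
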